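/- For real numbers x, y ≥ 0 and 0 < α ≤ 1, if n is a natural number with 2^(-(n+1))·x ≤ y ≤ 2^(-n)·x, then (x + y)^α ≥ x^α + (α/2)·2^(-(1-α)(n+1))·y^α. -/

import Mathlib

theorem stmt_12 (x y α : ℝ) (n : ℕ) (hx : 0 ≤ x) (hy : 0 ≤ y)
    (hα0 : 0 < α) (hα1 : α ≤ 1)
    (h1 : (2 : ℝ) ^ (-((n : ℝ) + 1)) * x ≤ y) (h2 : y ≤ (2 : ℝ) ^ (-(n : ℝ)) * x) :
    x ^ α + α / 2 * (2 : ℝ) ^ (-(1 - α) * ((n : ℝ) + 1)) * y ^ α ≤ (x + y) ^ α := by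
  rcases eq_or_lt_of_le hx with hx0 | hx0
  · have hy0 : y = 0 := le_antisymm (by simpa [← hx0] using h2) hy
    simp [← hx0, hy0, Real.zero_rpow hα0.ne']
  set t := y / x with ht
  have h2pos : (0:ℝ) < (2:ℝ) ^ (-((n : ℝ) + 1)) := Real.rpow_pos_of_pos two_pos _
  have htl : (2:ℝ) ^ (-((n : ℝ) + 1)) ≤ t := (le_div_iff₀ hx0).mpr h1
  have htu : t ≤ (2:ℝ) ^ (-(n : ℝ)) := (div_le_iff₀ hx0).mpr h2
  have ht0 : 0 < t := lt_of_lt_of_le h2pos htl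
  have ht1 : t ≤ 1 := htu.trans (Real.rpow_le_one_of_one_le_of_nonpos one_le_two (neg_nonpos.mpr (Nat.cast_nonneg n)))
  have h1t : (0:ℝ) < 1 + t := by linarith
  -- Step B : 1 + α * t * (1+t)^(α-1) ≤ (1+t)^α
  have hBern : (1 + t) ^ (1 - α) ≤ 1 + (1 - α) * t :=
    rpow_one_add_le_one_add_mul_self (by linarith) (by linarith) (by linarith)
  have hinv : (1 + t) ^ (α - 1) * (1 + t) ^ (1 - α) = 1 := by
    rw [← Real.rpow_add h1t]; norm_num
  have hp1 : (0:ℝ) < (1 + t) ^ (α - 1) := Real.rpow_pos_of_pos h1t _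
  have hB : 1 + α * t * (1 + t) ^ (α - 1) ≤ (1 + t) ^ α := by
    have e1 : (1 + t) ^ α = (1 + t) ^ (α - 1) * (1 + t) := by
      rw [← Real.rpow_add_one h1t.ne']; ring_nf
    have : 1 ≤ (1 + t) ^ (α - 1) * (1 + (1 - α) * t) := by
      calc (1:ℝ) = (1 + t) ^ (α - 1) * (1 + t) ^ (1 - α) := hinv.symm
        _ ≤ (1 + t) ^ (α - 1) * (1 + (1 - α) * t) :=
          mul_le_mul_of_nonneg_left hBern hp1.le
    nlinarith [this]
  -- Step C : 2^(α-1) ≤ (1+t)^(α-1)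
  have hC : (2:ℝ) ^ (α - 1) ≤ (1 + t) ^ (α - 1) :=
    Real.rpow_le_rpow_of_nonpos h1t (by linarith) (by linarith)
  -- Step D : 1/2 ≤ 2^(α-1)
  have hD : (1:ℝ)/2 ≤ (2:ℝ) ^ (α - 1) := by
    have := Real.rpow_le_rpow_of_exponent_le (x := (2:ℝ)) one_le_two
      (y := (-1:ℝ)) (z := α - 1) (by linarith)
    rwa [Real.rpow_neg_one, show ((2:ℝ))⁻¹ = 1/2 by norm_num] at this
  -- Step E : 2^(-(1-α)*((n:ℝ)+1)) * t^α ≤ t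
  have hE : (2:ℝ) ^ (-(1 - α) * ((n : ℝ) + 1)) * t ^ α ≤ t := by
    have h1 : (2:ℝ) ^ (-(1 - α) * ((n : ℝ) + 1)) = ((2:ℝ) ^ (-((n : ℝ) + 1))) ^ (1 - α) := by
      rw [← Real.rpow_mul (by norm_num : (0:ℝ) ≤ 2)]; ring_nf
    have h2 : ((2:ℝ) ^ (-((n : ℝ) + 1))) ^ (1 - α) ≤ t ^ (1 - α) :=
      Real.rpow_le_rpow h2pos.le htl (by linarith)
    have h3 : t ^ (1 - α) * t ^ α = t := by
      rw [← Real.rpow_add ht0]; norm_num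
    calc (2:ℝ) ^ (-(1 - α) * ((n : ℝ) + 1)) * t ^ α
        ≤ t ^ (1 - α) * t ^ α := by
          rw [h1]; exact mul_le_mul_of_nonneg_right h2 (Real.rpow_nonneg ht0.le _)
      _ = t := h3
  -- Combine normalized inequality
  have hta : 0 < t ^ α := Real.rpow_pos_of_pos ht0 _
  have hnorm : 1 + α / 2 * (2:ℝ) ^ (-(1 - α) * ((n : ℝ) + 1)) * t ^ α ≤ (1 + t) ^ α := by
    nlinarith [mul_le_mul_of_nonneg_left hC (mul_nonneg hα0.le ht0.le),
      mul_le_mul_of_nonneg_left hD (mul_nonneg hα0.le ht0.le),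
      mul_le_mul_of_nonneg_left hE (by linarith : (0:ℝ) ≤ α / 2)]
  -- Denormalize
  have hxa : 0 < x ^ α := Real.rpow_pos_of_pos hx0 _
  have hyx : y = t * x := by rw [ht, div_mul_cancel₀ y hx0.ne']
  have hya : y ^ α = t ^ α * x ^ α := by
    rw [hyx, Real.mul_rpow ht0.le hx]
  have hxy : (x + y) ^ α = (1 + t) ^ α * x ^ α := by
    rw [show x + y = (1 + t) * x by rw [hyx]; ring, Real.mul_rpow h1t.le hx]
  rw [hya, hxy]
  nlinarith [mul_le_mul_of_nonneg_right hnorm hxa.le]
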